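/- arXiv:2509.07565 — 8 statements merged into one kernel-verified Lean document; each statement's English description precedes it below -/
import Mathlib

section
/- If fL and fU are both differentiable at x₀ (in the classical sense), then the interval-valued function F(x) = [fL(x), fU(x)] is gH-differentiable at x₀ and its gH-derivative equals [min(fL′(x₀), fU′(x₀)), max(fL′(x₀), fU′(x₀))]; that is, min(γL(t), γU(t)) → min(fL′(x₀), fU′(x₀)) and max(γL(t), γU(t)) → max(fL′(x₀), fU′(x₀)) as t → 0 through t ≠ 0. -/
open Filter Topology

/-- The difference quotient `γ(t) = (f(x₀+t) − f(x₀))/t`. -/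
noncomputable def gamma (f : ℝ → ℝ) (x₀ : ℝ) (t : ℝ) : ℝ :=
  (f (x₀ + t) - f x₀) / t

/-- The interval-valued function `F(x) = [fL(x), fU(x)]` is gH-differentiable at `x₀` with
gH-derivative `[a,b]` (`a ≤ b`) if `min(γL(t), γU(t)) → a` and `max(γL(t), γU(t)) → b`
as `t → 0` through `t ≠ 0`. -/
def gHDifferentiableAt (fL fU : ℝ → ℝ) (x₀ a b : ℝ) : Prop :=
  a ≤ b ∧
  Tendsto (fun t => min (gamma fL x₀ t) (gamma fU x₀ t)) (𝓝[≠] (0 : ℝ)) (𝓝 a) ∧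
  Tendsto (fun t => max (gamma fL x₀ t) (gamma fU x₀ t)) (𝓝[≠] (0 : ℝ)) (𝓝 b)

/-- `γL, γU` are left complementary at `0` with values `{kL, kU}`, `kL < kU`:
the sets of left cluster values of `γL` and `γU` at `0` both equal `{kL, kU}`, and
`min(γL(t), γU(t)) → kL`, `max(γL(t), γU(t)) → kU` as `t → 0⁻`. -/
def LeftComplementary (γL γU : ℝ → ℝ) (kL kU : ℝ) : Prop :=
  kL < kU ∧
  {c : ℝ | MapClusterPt c (𝓝[<] (0 : ℝ)) γL} = {kL, kU} ∧
  {c : ℝ | MapClusterPt c (𝓝[<] (0 : ℝ)) γU} = {kL, kU} ∧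
  Tendsto (fun t => min (γL t) (γU t)) (𝓝[<] (0 : ℝ)) (𝓝 kL) ∧
  Tendsto (fun t => max (γL t) (γU t)) (𝓝[<] (0 : ℝ)) (𝓝 kU)

/-- `γL, γU` are right complementary at `0` with values `{kL, kU}`, `kL < kU`. -/
def RightComplementary (γL γU : ℝ → ℝ) (kL kU : ℝ) : Prop :=
  kL < kU ∧
  {c : ℝ | MapClusterPt c (𝓝[>] (0 : ℝ)) γL} = {kL, kU} ∧
  {c : ℝ | MapClusterPt c (𝓝[>] (0 : ℝ)) γU} = {kL, kU} ∧
  Tendsto (fun t => min (γL t) (γU t)) (𝓝[>] (0 : ℝ)) (𝓝 kL) ∧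
  Tendsto (fun t => max (γL t) (γU t)) (𝓝[>] (0 : ℝ)) (𝓝 kU)

/-- If `fL` and `fU` are both differentiable at `x₀`, then `F(x) = [fL(x), fU(x)]` is
gH-differentiable at `x₀` with gH-derivative `[min(fL′(x₀), fU′(x₀)), max(fL′(x₀), fU′(x₀))]`. -/
theorem gH_differentiable_of_endpoint_differentiable (fL fU : ℝ → ℝ) (x₀ dL dU : ℝ)
    (hle : ∀ x, fL x ≤ fU x)
    (hL : HasDerivAt fL dL x₀) (hU : HasDerivAt fU dU x₀) :
    gHDifferentiableAt fL fU x₀ (min dL dU) (max dL dU) := by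
  have hgL : Tendsto (gamma fL x₀) (𝓝[≠] (0:ℝ)) (𝓝 dL) := by
    refine hL.tendsto_slope_zero.congr fun t => ?_
    simp [gamma, smul_eq_mul, div_eq_inv_mul]
  have hgU : Tendsto (gamma fU x₀) (𝓝[≠] (0:ℝ)) (𝓝 dU) := by
    refine hU.tendsto_slope_zero.congr fun t => ?_
    simp [gamma, smul_eq_mul, div_eq_inv_mul]
  exact ⟨min_le_max, hgL.min hgU, hgL.max hgU⟩
end

section
/- Case (i) of the characterization of the gH-derivative: suppose the right-sided derivatives dL⁺ = lim_{t→0⁺} γL(t) and dU⁺ = lim_{t→0⁺} γU(t) and the left-sided derivatives dL⁻ = lim_{t→0⁻} γL(t) and dU⁻ = lim_{t→0⁻} γU(t) all exist, and that min(dL⁺, dU⁺) = min(dL⁻, dU⁻) and max(dL⁺, dU⁺) = max(dL⁻, dU⁻). Then the interval-valued function F(x) = [fL(x), fU(x)] is gH-differentiable at x₀ with gH-derivative [min(dL⁺, dU⁺), max(dL⁺, dU⁺)]. -/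
open Filter Topology

/-- Case (i) of the characterization of the gH-derivative: if all four one-sided derivatives
of the endpoint functions exist and the min's and max's from the right and the left agree,
then `F` is gH-differentiable at `x₀` with gH-derivative `[min(dL⁺, dU⁺), max(dL⁺, dU⁺)]`. -/
theorem gH_differentiable_case_i (fL fU : ℝ → ℝ) (x₀ dLp dUp dLm dUm : ℝ)
    (hle : ∀ x, fL x ≤ fU x)
    (hLp : Tendsto (gamma fL x₀) (𝓝[>] (0 : ℝ)) (𝓝 dLp))
    (hUp : Tendsto (gamma fU x₀) (𝓝[>] (0 : ℝ)) (𝓝 dUp))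
    (hLm : Tendsto (gamma fL x₀) (𝓝[<] (0 : ℝ)) (𝓝 dLm))
    (hUm : Tendsto (gamma fU x₀) (𝓝[<] (0 : ℝ)) (𝓝 dUm))
    (hmin : min dLp dUp = min dLm dUm)
    (hmax : max dLp dUp = max dLm dUm) :
    gHDifferentiableAt fL fU x₀ (min dLp dUp) (max dLp dUp) := by
  refine ⟨min_le_max, ?_, ?_⟩ <;>
  · rw [← nhdsLT_sup_nhdsGT (0 : ℝ), tendsto_sup]
    constructor
    · first
        | exact hmin ▸ hLm.min hUm
        | exact hmax ▸ hLm.max hUm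
    · first
        | exact hLp.min hUp
        | exact hLp.max hUp
end

section
/- Case (ii) of the characterization of the gH-derivative: suppose the right-sided derivatives dL⁺ = lim_{t→0⁺} γL(t) and dU⁺ = lim_{t→0⁺} γU(t) exist, that γL and γU are left complementary at 0 with values {kL, kU} where kL < kU, and that min(dL⁺, dU⁺) = kL and max(dL⁺, dU⁺) = kU. Then the interval-valued function F(x) = [fL(x), fU(x)] is gH-differentiable at x₀ with gH-derivative [kL, kU]. -/
open Filter Topology

/-- Case (ii) of the characterization of the gH-derivative: if the right-sided derivatives
`dL⁺, dU⁺` of `fL, fU` at `x₀` exist, `γL, γU` are left complementary at `0` with values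
`{kL, kU}` (`kL < kU`), and `min(dL⁺, dU⁺) = kL`, `max(dL⁺, dU⁺) = kU`, then `F` is
gH-differentiable at `x₀` with gH-derivative `[kL, kU]`. -/
theorem gH_differentiable_case_ii (fL fU : ℝ → ℝ) (x₀ dLp dUp kL kU : ℝ)
    (hle : ∀ x, fL x ≤ fU x)
    (hLp : Tendsto (gamma fL x₀) (𝓝[>] (0 : ℝ)) (𝓝 dLp))
    (hUp : Tendsto (gamma fU x₀) (𝓝[>] (0 : ℝ)) (𝓝 dUp))
    (hcomp : LeftComplementary (gamma fL x₀) (gamma fU x₀) kL kU)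
    (hmin : min dLp dUp = kL)
    (hmax : max dLp dUp = kU) :
    gHDifferentiableAt fL fU x₀ kL kU := by
  obtain ⟨hlt, _, _, hminL, hmaxL⟩ := hcomp
  have hminR : Tendsto (fun t => min (gamma fL x₀ t) (gamma fU x₀ t)) (𝓝[>] (0:ℝ)) (𝓝 kL) := by
    rw [← hmin]; exact hLp.min hUp
  have hmaxR : Tendsto (fun t => max (gamma fL x₀ t) (gamma fU x₀ t)) (𝓝[>] (0:ℝ)) (𝓝 kU) := by
    rw [← hmax]; exact hLp.max hUp
  refine ⟨hlt.le, ?_, ?_⟩ <;> rw [← nhdsLT_sup_nhdsGT, tendsto_sup]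
  · exact ⟨hminL, hminR⟩
  · exact ⟨hmaxL, hmaxR⟩
end

section
/- Case (iii) of the characterization of the gH-derivative: suppose the left-sided derivatives dL⁻ = lim_{t→0⁻} γL(t) and dU⁻ = lim_{t→0⁻} γU(t) exist, that γL and γU are right complementary at 0 with values {kL, kU} where kL < kU, and that min(dL⁻, dU⁻) = kL and max(dL⁻, dU⁻) = kU. Then the interval-valued function F(x) = [fL(x), fU(x)] is gH-differentiable at x₀ with gH-derivative [kL, kU]. -/
open Filter Topology

/-- Case (iii) of the characterization of the gH-derivative: if the left-sided derivatives
`dL⁻, dU⁻` of `fL, fU` at `x₀` exist, `γL, γU` are right complementary at `0` with values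
`{kL, kU}` (`kL < kU`), and `min(dL⁻, dU⁻) = kL`, `max(dL⁻, dU⁻) = kU`, then `F` is
gH-differentiable at `x₀` with gH-derivative `[kL, kU]`. -/
theorem gH_differentiable_case_iii (fL fU : ℝ → ℝ) (x₀ dLm dUm kL kU : ℝ)
    (hle : ∀ x, fL x ≤ fU x)
    (hLm : Tendsto (gamma fL x₀) (𝓝[<] (0 : ℝ)) (𝓝 dLm))
    (hUm : Tendsto (gamma fU x₀) (𝓝[<] (0 : ℝ)) (𝓝 dUm))
    (hcomp : RightComplementary (gamma fL x₀) (gamma fU x₀) kL kU)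
    (hmin : min dLm dUm = kL)
    (hmax : max dLm dUm = kU) :
    gHDifferentiableAt fL fU x₀ kL kU := by
  obtain ⟨hlt, -, -, hminR, hmaxR⟩ := hcomp
  have hminL : Tendsto (fun t => min (gamma fL x₀ t) (gamma fU x₀ t)) (𝓝[<] (0:ℝ)) (𝓝 kL) := by
    rw [← hmin]; exact hLm.min hUm
  have hmaxL : Tendsto (fun t => max (gamma fL x₀ t) (gamma fU x₀ t)) (𝓝[<] (0:ℝ)) (𝓝 kU) := by
    rw [← hmax]; exact hLm.max hUm
  refine ⟨hlt.le, ?_, ?_⟩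
  · rw [← nhdsLT_sup_nhdsGT (0:ℝ), tendsto_sup]
    exact ⟨hminL, hminR⟩
  · rw [← nhdsLT_sup_nhdsGT (0:ℝ), tendsto_sup]
    exact ⟨hmaxL, hmaxR⟩
end

section
/- Complete characterization of gH-differentiability (Theorem 3.1): the interval-valued function F(x) = [fL(x), fU(x)] is gH-differentiable at x₀ (i.e., there exist reals a ≤ b with min(γL(t), γU(t)) → a and max(γL(t), γU(t)) → b as t → 0 through t ≠ 0) if and only if at least one of the following holds: (i) the one-sided derivatives dL⁺, dU⁺ (from the right) and dL⁻, dU⁻ (from the left) of fL and fU at x₀ all exist with min(dL⁺, dU⁺) = min(dL⁻, dU⁻) and max(dL⁺, dU⁺) = max(dL⁻, dU⁻); (ii) dL⁺ and dU⁺ exist and there are reals kL < kU such that γL, γU are left complementary at 0 with values {kL, kU} and min(dL⁺, dU⁺) = kL, max(dL⁺, dU⁺) = kU; (iii) dL⁻ and dU⁻ exist and there are reals kL < kU such that γL, γU are right complementary at 0 with values {kL, kU} and min(dL⁻, dU⁻) = kL, max(dL⁻, dU⁻) = kU; (iv) there are reals kL < kU such that γL, γU are both left complementary and right complementary at 0 with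 values {kL, kU}. -/
open Filter Topology

/-- Any cluster value of a function sandwiched pointwise into `{m t, M t}` with `m → a`,
`M → b` must be `a` or `b`. -/
lemma cluster_subset_aux {g m M : ℝ → ℝ} {l : Filter ℝ} {a b c : ℝ}
    (hg : ∀ t, g t = m t ∨ g t = M t)
    (hm : Tendsto m l (𝓝 a)) (hM : Tendsto M l (𝓝 b))
    (h : MapClusterPt c l g) : c = a ∨ c = b := by
  by_contra h'
  push_neg at h'
  obtain ⟨ha, hb⟩ := h'
  have hε0 : 0 < min (dist c a) (dist c b) / 2 :=
    half_pos (lt_min (dist_pos.mpr ha) (dist_pos.mpr hb))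
  set ε := min (dist c a) (dist c b) / 2 with hεdef
  have e1 := Metric.tendsto_nhds.mp hm ε hε0
  have e2 := Metric.tendsto_nhds.mp hM ε hε0
  have f1 := (mapClusterPt_iff_frequently.mp h) (Metric.ball c ε) (Metric.ball_mem_nhds c hε0)
  obtain ⟨t, htg, ht1, ht2⟩ := (f1.and_eventually (e1.and e2)).exists
  rw [Metric.mem_ball] at htg
  have h2e : 2 * ε = min (dist c a) (dist c b) := by rw [hεdef]; ring
  have h2a : 2 * ε ≤ dist c a := h2e ▸ min_le_left _ _
  have h2b : 2 * ε ≤ dist c b := h2e ▸ min_le_right _ _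
  rcases hg t with h | h
  · have htri := dist_triangle c (m t) a
    rw [dist_comm c (m t)] at htri
    rw [h] at htg
    linarith
  · have htri := dist_triangle c (M t) b
    rw [dist_comm c (M t)] at htri
    rw [h] at htg
    linarith

/-- Per-side dichotomy: if `min (γL, γU) → a` and `max (γL, γU) → b` with `a < b` along a
nontrivial filter, then either both `γL, γU` converge (to `{a, b}` in some order), or both
have cluster sets exactly `{a, b}`. -/
lemma side_dichotomy (γL γU : ℝ → ℝ) (l : Filter ℝ) [l.NeBot] (a b : ℝ) (hab : a < b)
    (hm : Tendsto (fun t => min (γL t) (γU t)) l (𝓝 a))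
    (hM : Tendsto (fun t => max (γL t) (γU t)) l (𝓝 b)) :
    (∃ c d, Tendsto γL l (𝓝 c) ∧ Tendsto γU l (𝓝 d) ∧ min c d = a ∧ max c d = b) ∨
    ({c : ℝ | MapClusterPt c l γL} = {a, b} ∧ {c : ℝ | MapClusterPt c l γU} = {a, b}) := by
  set mid := (a + b) / 2 with hmid
  have hq : 0 < (b - a) / 4 := by linarith
  have memL : ∀ t, γL t = min (γL t) (γU t) ∨ γL t = max (γL t) (γU t) := fun t =>
    (le_total (γL t) (γU t)).imp (fun h => (min_eq_left h).symm) (fun h => (max_eq_left h).symm)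
  have memU : ∀ t, γU t = min (γL t) (γU t) ∨ γU t = max (γL t) (γU t) := fun t =>
    (le_total (γU t) (γL t)).imp (fun h => (min_eq_right h).symm) (fun h => (max_eq_right h).symm)
  have evm : ∀ᶠ t in l, dist (min (γL t) (γU t)) a < (b - a) / 4 :=
    Metric.tendsto_nhds.mp hm _ hq
  have evM : ∀ᶠ t in l, dist (max (γL t) (γU t)) b < (b - a) / 4 :=
    Metric.tendsto_nhds.mp hM _ hq
  by_cases hA : ∀ᶠ t in l, γL t < mid
  · -- γL → a, γU → b
    left
    have key : ∀ᶠ t in l, min (γL t) (γU t) = γL t ∧ max (γL t) (γU t) = γU t := by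
      filter_upwards [hA, evM] with t h1 h2
      have hlt : γL t < max (γL t) (γU t) := by
        rw [Real.dist_eq, abs_lt] at h2
        rw [hmid] at h1
        linarith
      have hLU : γL t < γU t := by
        rcases max_choice (γL t) (γU t) with h | h
        · rw [h] at hlt; exact absurd hlt (lt_irrefl _)
        · rwa [h] at hlt
      exact ⟨min_eq_left hLU.le, max_eq_right hLU.le⟩
    refine ⟨a, b, hm.congr' ?_, hM.congr' ?_, min_eq_left hab.le, max_eq_right hab.le⟩
    · filter_upwards [key] with t ht using ht.1
    · filter_upwards [key] with t ht using ht.2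
  by_cases hB : ∀ᶠ t in l, mid < γL t
  · -- γL → b, γU → a
    left
    have key : ∀ᶠ t in l, min (γL t) (γU t) = γU t ∧ max (γL t) (γU t) = γL t := by
      filter_upwards [hB, evm] with t h1 h2
      have hlt : min (γL t) (γU t) < γL t := by
        rw [Real.dist_eq, abs_lt] at h2
        rw [hmid] at h1
        linarith
      have hUL : γU t < γL t := by
        rcases min_choice (γL t) (γU t) with h | h
        · rw [h] at hlt; exact absurd hlt (lt_irrefl _)
        · rwa [h] at hlt
      exact ⟨min_eq_right hUL.le, max_eq_left hUL.le⟩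
    refine ⟨b, a, hM.congr' ?_, hm.congr' ?_, min_eq_right hab.le, max_eq_left hab.le⟩
    · filter_upwards [key] with t ht using ht.2
    · filter_upwards [key] with t ht using ht.1
  · -- complementary: both cluster sets are {a, b}
    right
    rw [Filter.not_eventually] at hA hB
    have freqHi : ∃ᶠ t in l, mid ≤ γL t := hA.mono fun t ht => not_lt.mp ht
    have freqLo : ∃ᶠ t in l, γL t ≤ mid := hB.mono fun t ht => not_lt.mp ht
    -- frequently γL is near b and γU near a
    have freqB : ∀ ε > (0:ℝ), ∃ᶠ t in l, dist (γL t) b < ε ∧ dist (γU t) a < ε := by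
      intro ε hε
      have hε' : 0 < min ε ((b - a) / 4) := lt_min hε hq
      have e1 := Metric.tendsto_nhds.mp hm _ hε'
      have e2 := Metric.tendsto_nhds.mp hM _ hε'
      refine (freqHi.and_eventually (e1.and e2)).mono ?_
      rintro t ⟨ht, h1, h2⟩
      have hmlt : min (γL t) (γU t) < mid := by
        have := (abs_lt.mp ((Real.dist_eq _ _) ▸ h1)).2
        have := min_le_right ε ((b - a) / 4)
        rw [hmid]; linarith
      have hLmax : γL t = max (γL t) (γU t) := by
        rcases memL t with h | h
        · rw [← h] at hmlt; exact absurd ht (not_le.mpr hmlt)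
        · exact h
      have hUmin : γU t = min (γL t) (γU t) := by
        rcases min_choice (γL t) (γU t) with h | h
        · exfalso
          have hminb : dist (min (γL t) (γU t)) b < min ε ((b - a) / 4) := by
            rw [h, hLmax]; exact h2
          have d1 := (abs_lt.mp ((Real.dist_eq _ _) ▸ h1)).2
          have d2 := (abs_lt.mp ((Real.dist_eq _ _) ▸ hminb)).1
          have := min_le_right ε ((b - a) / 4)
          linarith
        · exact h.symm
      refine ⟨?_, ?_⟩
      · rw [hLmax]; exact lt_of_lt_of_le h2 (min_le_left _ _)
      · rw [hUmin]; exact lt_of_lt_of_le h1 (min_le_left _ _)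
    -- frequently γL is near a and γU near b
    have freqA : ∀ ε > (0:ℝ), ∃ᶠ t in l, dist (γL t) a < ε ∧ dist (γU t) b < ε := by
      intro ε hε
      have hε' : 0 < min ε ((b - a) / 4) := lt_min hε hq
      have e1 := Metric.tendsto_nhds.mp hm _ hε'
      have e2 := Metric.tendsto_nhds.mp hM _ hε'
      refine (freqLo.and_eventually (e1.and e2)).mono ?_
      rintro t ⟨ht, h1, h2⟩
      have hMgt : mid < max (γL t) (γU t) := by
        have := (abs_lt.mp ((Real.dist_eq _ _) ▸ h2)).1
        have := min_le_right ε ((b - a) / 4)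
        rw [hmid]; linarith
      have hLmin : γL t = min (γL t) (γU t) := by
        rcases memL t with h | h
        · exact h
        · rw [← h] at hMgt; exact absurd ht (not_le.mpr hMgt)
      have hUmax : γU t = max (γL t) (γU t) := by
        rcases max_choice (γL t) (γU t) with h | h
        · exfalso
          have hmaxa : dist (max (γL t) (γU t)) a < min ε ((b - a) / 4) := by
            rw [h, hLmin]; exact h1
          have d1 := (abs_lt.mp ((Real.dist_eq _ _) ▸ h2)).1
          have d2 := (abs_lt.mp ((Real.dist_eq _ _) ▸ hmaxa)).2
          have := min_le_right ε ((b - a) / 4)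
          linarith
        · exact h.symm
      refine ⟨?_, ?_⟩
      · rw [hLmin]; exact lt_of_lt_of_le h1 (min_le_left _ _)
      · rw [hUmax]; exact lt_of_lt_of_le h2 (min_le_left _ _)
    have mk : ∀ {f : ℝ → ℝ} {c : ℝ},
        (∀ ε > (0:ℝ), ∃ᶠ t in l, dist (f t) c < ε) → MapClusterPt c l f := by
      intro f c hf
      rw [mapClusterPt_iff_frequently]
      intro s hs
      obtain ⟨ε, hε, hsub⟩ := Metric.mem_nhds_iff.mp hs
      exact (hf ε hε).mono fun t ht => hsub (Metric.mem_ball.mpr ht)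
    have cLa : MapClusterPt a l γL := mk fun ε hε => (freqA ε hε).mono fun t ht => ht.1
    have cLb : MapClusterPt b l γL := mk fun ε hε => (freqB ε hε).mono fun t ht => ht.1
    have cUa : MapClusterPt a l γU := mk fun ε hε => (freqB ε hε).mono fun t ht => ht.2
    have cUb : MapClusterPt b l γU := mk fun ε hε => (freqA ε hε).mono fun t ht => ht.2
    constructor
    · ext c
      simp only [Set.mem_setOf_eq, Set.mem_insert_iff, Set.mem_singleton_iff]
      constructor
      · exact fun h => cluster_subset_aux memL hm hM h
      · rintro (rfl | rfl); exacts [cLa, cLb]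
    · ext c
      simp only [Set.mem_setOf_eq, Set.mem_insert_iff, Set.mem_singleton_iff]
      constructor
      · exact fun h => cluster_subset_aux memU hm hM h
      · rintro (rfl | rfl); exacts [cUa, cUb]

/-- Complete characterization of gH-differentiability (Theorem 3.1): `F(x) = [fL(x), fU(x)]`
is gH-differentiable at `x₀` iff one of the cases (i)–(iv) holds. -/
theorem gH_differentiable_characterization (fL fU : ℝ → ℝ) (x₀ : ℝ)
    (hle : ∀ x, fL x ≤ fU x) :
    (∃ a b : ℝ, gHDifferentiableAt fL fU x₀ a b) ↔
    ((∃ dLp dUp dLm dUm : ℝ,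
        Tendsto (gamma fL x₀) (𝓝[>] (0 : ℝ)) (𝓝 dLp) ∧
        Tendsto (gamma fU x₀) (𝓝[>] (0 : ℝ)) (𝓝 dUp) ∧
        Tendsto (gamma fL x₀) (𝓝[<] (0 : ℝ)) (𝓝 dLm) ∧
        Tendsto (gamma fU x₀) (𝓝[<] (0 : ℝ)) (𝓝 dUm) ∧
        min dLp dUp = min dLm dUm ∧ max dLp dUp = max dLm dUm) ∨
     (∃ dLp dUp kL kU : ℝ,
        Tendsto (gamma fL x₀) (𝓝[>] (0 : ℝ)) (𝓝 dLp) ∧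
        Tendsto (gamma fU x₀) (𝓝[>] (0 : ℝ)) (𝓝 dUp) ∧
        LeftComplementary (gamma fL x₀) (gamma fU x₀) kL kU ∧
        min dLp dUp = kL ∧ max dLp dUp = kU) ∨
     (∃ dLm dUm kL kU : ℝ,
        Tendsto (gamma fL x₀) (𝓝[<] (0 : ℝ)) (𝓝 dLm) ∧
        Tendsto (gamma fU x₀) (𝓝[<] (0 : ℝ)) (𝓝 dUm) ∧
        RightComplementary (gamma fL x₀) (gamma fU x₀) kL kU ∧
        min dLm dUm = kL ∧ max dLm dUm = kU) ∨
     (∃ kL kU : ℝ,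
        LeftComplementary (gamma fL x₀) (gamma fU x₀) kL kU ∧
        RightComplementary (gamma fL x₀) (gamma fU x₀) kL kU)) := by
  have hsup : 𝓝[<] (0:ℝ) ⊔ 𝓝[>] (0:ℝ) = 𝓝[≠] (0:ℝ) := nhdsLT_sup_nhdsGT 0
  have hL : 𝓝[<] (0:ℝ) ≤ 𝓝[≠] (0:ℝ) := hsup ▸ le_sup_left
  have hR : 𝓝[>] (0:ℝ) ≤ 𝓝[≠] (0:ℝ) := hsup ▸ le_sup_right
  constructor
  · rintro ⟨a, b, hab, hm, hM⟩
    have hml := hm.mono_left hL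
    have hmr := hm.mono_left hR
    have hMl := hM.mono_left hL
    have hMr := hM.mono_left hR
    rcases eq_or_lt_of_le hab with rfl | hab'
    · -- a = b : both one-sided derivatives exist and are all equal
      have tL : Tendsto (gamma fL x₀) (𝓝[≠] (0:ℝ)) (𝓝 a) :=
        tendsto_of_tendsto_of_tendsto_of_le_of_le hm hM
          (fun t => min_le_left _ _) (fun t => le_max_left _ _)
      have tU : Tendsto (gamma fU x₀) (𝓝[≠] (0:ℝ)) (𝓝 a) :=
        tendsto_of_tendsto_of_tendsto_of_le_of_le hm hM
          (fun t => min_le_right _ _) (fun t => le_max_right _ _)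
      exact Or.inl ⟨a, a, a, a, tL.mono_left hR, tU.mono_left hR,
        tL.mono_left hL, tU.mono_left hL, rfl, rfl⟩
    · rcases side_dichotomy _ _ _ a b hab' hml hMl with
        ⟨cm, dm, hcLm, hcUm, hminm, hmaxm⟩ | ⟨SLl, SUl⟩
      · rcases side_dichotomy _ _ _ a b hab' hmr hMr with
          ⟨cp, dp, hcLp, hcUp, hminp, hmaxp⟩ | ⟨SLr, SUr⟩
        · exact Or.inl ⟨cp, dp, cm, dm, hcLp, hcUp, hcLm, hcUm,
            by rw [hminp, hminm], by rw [hmaxp, hmaxm]⟩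
        · exact Or.inr (Or.inr (Or.inl ⟨cm, dm, a, b, hcLm, hcUm,
            ⟨hab', SLr, SUr, hmr, hMr⟩, hminm, hmaxm⟩))
      · rcases side_dichotomy _ _ _ a b hab' hmr hMr with
          ⟨cp, dp, hcLp, hcUp, hminp, hmaxp⟩ | ⟨SLr, SUr⟩
        · exact Or.inr (Or.inl ⟨cp, dp, a, b, hcLp, hcUp,
            ⟨hab', SLl, SUl, hml, hMl⟩, hminp, hmaxp⟩)
        · exact Or.inr (Or.inr (Or.inr ⟨a, b,
            ⟨hab', SLl, SUl, hml, hMl⟩, ⟨hab', SLr, SUr, hmr, hMr⟩⟩))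
  · rintro (⟨dLp, dUp, dLm, dUm, h1, h2, h3, h4, hmin, hmax⟩ |
      ⟨dLp, dUp, kL, kU, h1, h2, ⟨hk, _, _, lmin, lmax⟩, hmin, hmax⟩ |
      ⟨dLm, dUm, kL, kU, h1, h2, ⟨hk, _, _, rmin, rmax⟩, hmin, hmax⟩ |
      ⟨kL, kU, ⟨hk, _, _, lmin, lmax⟩, ⟨_, _, _, rmin, rmax⟩⟩)
    · refine ⟨min dLp dUp, max dLp dUp,
        le_trans (min_le_left _ _) (le_max_left _ _), ?_, ?_⟩
      · rw [← hsup, tendsto_sup]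
        exact ⟨by rw [hmin]; exact h3.min h4, h1.min h2⟩
      · rw [← hsup, tendsto_sup]
        exact ⟨by rw [hmax]; exact h3.max h4, h1.max h2⟩
    · refine ⟨kL, kU, hk.le, ?_, ?_⟩
      · rw [← hsup, tendsto_sup]
        exact ⟨lmin, by rw [← hmin]; exact h1.min h2⟩
      · rw [← hsup, tendsto_sup]
        exact ⟨lmax, by rw [← hmax]; exact h1.max h2⟩
    · refine ⟨kL, kU, hk.le, ?_, ?_⟩
      · rw [← hsup, tendsto_sup]
        exact ⟨by rw [← hmin]; exact h1.min h2, rmin⟩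
      · rw [← hsup, tendsto_sup]
        exact ⟨by rw [← hmax]; exact h1.max h2, rmax⟩
    · refine ⟨kL, kU, hk.le, ?_, ?_⟩
      · rw [← hsup, tendsto_sup]
        exact ⟨lmin, rmin⟩
      · rw [← hsup, tendsto_sup]
        exact ⟨lmax, rmax⟩
end

section
/- Let fL(x) = |x| + sin x and fU(x) = |x| + sin x + (x − 4)². Then at x₀ = 0 all four one-sided derivatives exist: the right- and left-sided derivatives of fL at 0 are 2 and 0, and those of fU at 0 are −6 and −8; consequently [min(dL⁺, dU⁺), max(dL⁺, dU⁺)] = [−6, 2] ≠ [−8, 0] = [min(dL⁻, dU⁻), max(dL⁻, dU⁻)], and the interval-valued function F(x) = [fL(x), fU(x)] is NOT gH-differentiable at 0: there exist no reals a ≤ b with min(γL(t), γU(t)) → a and max(γL(t), γU(t)) → b as t → 0 through t ≠ 0. -/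
open Filter Topology

lemma sin_slope : Tendsto (fun t : ℝ => Real.sin t / t) (𝓝[≠] (0:ℝ)) (𝓝 1) := by
  have h := (Real.hasDerivAt_sin 0)
  rw [hasDerivAt_iff_tendsto_slope] at h
  simp only [Real.cos_zero] at h
  refine h.congr (fun t => ?_)
  simp [slope_def_field, div_eq_div_iff]

lemma right_le : (𝓝[>] (0:ℝ)) ≤ 𝓝[≠] (0:ℝ) :=
  nhdsWithin_mono _ (fun x hx => ne_of_gt hx)

lemma left_le : (𝓝[<] (0:ℝ)) ≤ 𝓝[≠] (0:ℝ) :=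
  nhdsWithin_mono _ (fun x hx => ne_of_lt hx)

lemma gL_right : Tendsto (gamma (fun x => |x| + Real.sin x) 0) (𝓝[>] (0:ℝ)) (𝓝 2) := by
  have h : Tendsto (fun t : ℝ => Real.sin t / t + 1) (𝓝[>] (0:ℝ)) (𝓝 2) := by
    have := (sin_slope.mono_left right_le).add tendsto_const_nhds (b := (1:ℝ))
    norm_num at this; exact this
  refine h.congr' ?_
  filter_upwards [self_mem_nhdsWithin] with t (ht : 0 < t)
  simp [gamma, abs_of_pos ht, add_div, div_self (ne_of_gt ht), add_comm]

lemma gL_left : Tendsto (gamma (fun x => |x| + Real.sin x) 0) (𝓝[<] (0:ℝ)) (𝓝 0) := by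
  have h : Tendsto (fun t : ℝ => Real.sin t / t + (-1)) (𝓝[<] (0:ℝ)) (𝓝 0) := by
    have := (sin_slope.mono_left left_le).add tendsto_const_nhds (b := (-1:ℝ))
    norm_num at this; exact this
  refine h.congr' ?_
  filter_upwards [self_mem_nhdsWithin] with t (ht : t < 0)
  have ht' : t ≠ 0 := ne_of_lt ht
  unfold gamma
  field_simp [gamma, abs_of_neg ht]
  simp only [zero_add, abs_zero, abs_of_neg ht, Real.sin_zero]
  ring

lemma gU_eq : ∀ t : ℝ, t ≠ 0 →
    gamma (fun x => |x| + Real.sin x + (x - 4) ^ 2) 0 t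
      = gamma (fun x => |x| + Real.sin x) 0 t + (t - 8) := by
  intro t ht
  simp only [gamma]
  field_simp
  ring

lemma gU_right : Tendsto (gamma (fun x => |x| + Real.sin x + (x - 4) ^ 2) 0)
    (𝓝[>] (0:ℝ)) (𝓝 (-6)) := by
  have h := gL_right.add ((tendsto_id.sub_const 8).mono_left nhdsWithin_le_nhds)
  norm_num at h
  refine h.congr' ?_
  filter_upwards [self_mem_nhdsWithin] with t (ht : 0 < t)
  exact (gU_eq t (ne_of_gt ht)).symm

lemma gU_left : Tendsto (gamma (fun x => |x| + Real.sin x + (x - 4) ^ 2) 0)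
    (𝓝[<] (0:ℝ)) (𝓝 (-8)) := by
  have h := gL_left.add ((tendsto_id.sub_const 8).mono_left nhdsWithin_le_nhds)
  norm_num at h
  refine h.congr' ?_
  filter_upwards [self_mem_nhdsWithin] with t (ht : t < 0)
  exact (gU_eq t (ne_of_lt ht)).symm

/-- For `fL(x) = |x| + sin x`, `fU(x) = |x| + sin x + (x − 4)²`: all four one-sided
derivatives at `0` exist (`dL⁺ = 2`, `dL⁻ = 0`, `dU⁺ = −6`, `dU⁻ = −8`), but
`F(x) = [fL(x), fU(x)]` is NOT gH-differentiable at `0`. -/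
theorem gH_not_differentiable_example :
    Tendsto (gamma (fun x => |x| + Real.sin x) 0) (𝓝[>] (0 : ℝ)) (𝓝 2) ∧
    Tendsto (gamma (fun x => |x| + Real.sin x) 0) (𝓝[<] (0 : ℝ)) (𝓝 0) ∧
    Tendsto (gamma (fun x => |x| + Real.sin x + (x - 4) ^ 2) 0) (𝓝[>] (0 : ℝ)) (𝓝 (-6)) ∧
    Tendsto (gamma (fun x => |x| + Real.sin x + (x - 4) ^ 2) 0) (𝓝[<] (0 : ℝ)) (𝓝 (-8)) ∧
    ¬ ∃ a b : ℝ, gHDifferentiableAt (fun x => |x| + Real.sin x)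
        (fun x => |x| + Real.sin x + (x - 4) ^ 2) 0 a b := by
  refine ⟨gL_right, gL_left, gU_right, gU_left, ?_⟩
  rintro ⟨a, b, -, hmin, -⟩
  have hR : Tendsto (fun t => min (gamma (fun x => |x| + Real.sin x) 0 t)
      (gamma (fun x => |x| + Real.sin x + (x - 4) ^ 2) 0 t)) (𝓝[>] (0:ℝ)) (𝓝 (-6)) := by
    have := gL_right.min gU_right
    norm_num at this; exact this
  have hL : Tendsto (fun t => min (gamma (fun x => |x| + Real.sin x) 0 t)
      (gamma (fun x => |x| + Real.sin x + (x - 4) ^ 2) 0 t)) (𝓝[<] (0:ℝ)) (𝓝 (-8)) := by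
    have := gL_left.min gU_left
    norm_num at this; exact this
  have ha1 : a = -6 := tendsto_nhds_unique (hmin.mono_left right_le) hR
  have ha2 : a = -8 := tendsto_nhds_unique (hmin.mono_left left_le) hL
  norm_num [ha1] at ha2
end

section
/- Define fL : ℝ → ℝ by fL(x) = x for x > 0, fL(0) = 0, fL(x) = x for x < 0 rational, and fL(x) = 2x for x < 0 irrational; define fU : ℝ → ℝ by fU(x) = 2x + 1 for x > 0, fU(0) = 1, fU(x) = x² + 2x + 1 for x < 0 rational, and fU(x) = x² + x + 1 for x < 0 irrational. Then fL ≤ fU pointwise, the right-sided derivatives of fL and fU at 0 exist and equal 1 and 2 respectively, the difference quotients γL and γU are left complementary at 0 with values {1, 2} (in particular, neither fL nor fU has a left-sided derivative at 0), and the interval-valued function F(x) = [fL(x), fU(x)] is gH-differentiable at 0 with gH-derivative [1, 2]: min(γL(t), γU(t)) → 1 and max(γL(t), γU(t)) → 2 as t → 0 through t ≠ 0. -/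
open Filter Topology

open Classical in
/-- `fL(x) = x` for `x > 0`, `fL(0) = 0`, `fL(x) = x` for `x < 0` rational,
`fL(x) = 2x` for `x < 0` irrational. -/
noncomputable def fL9 : ℝ → ℝ := fun x =>
  if 0 < x then x else if x = 0 then 0 else if Irrational x then 2 * x else x

open Classical in
/-- `fU(x) = 2x + 1` for `x > 0`, `fU(0) = 1`, `fU(x) = x² + 2x + 1` for `x < 0` rational,
`fU(x) = x² + x + 1` for `x < 0` irrational. -/
noncomputable def fU9 : ℝ → ℝ := fun x =>
  if 0 < x then 2 * x + 1 else if x = 0 then 1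
  else if Irrational x then x ^ 2 + x + 1 else x ^ 2 + 2 * x + 1

lemma fL9_zero : fL9 0 = 0 := by simp [fL9]

lemma fU9_zero : fU9 0 = 1 := by simp [fU9]

lemma gl_pos {t : ℝ} (ht : 0 < t) : gamma fL9 0 t = 1 := by
  have h1 : fL9 t = t := by simp only [fL9, if_pos ht]
  simp only [gamma, zero_add, h1, fL9_zero, sub_zero, div_self ht.ne']

lemma gu_pos {t : ℝ} (ht : 0 < t) : gamma fU9 0 t = 2 := by
  have h1 : fU9 t = 2 * t + 1 := by simp only [fU9, if_pos ht]
  simp only [gamma, zero_add, h1, fU9_zero]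
  field_simp
  ring

lemma gl_neg_rat {t : ℝ} (ht : t < 0) (h : ¬ Irrational t) : gamma fL9 0 t = 1 := by
  have h1 : fL9 t = t := by simp only [fL9, if_neg (asymm ht), if_neg ht.ne, if_neg h]
  simp only [gamma, zero_add, h1, fL9_zero, sub_zero, div_self ht.ne]

lemma gl_neg_irr {t : ℝ} (ht : t < 0) (h : Irrational t) : gamma fL9 0 t = 2 := by
  have h1 : fL9 t = 2 * t := by simp only [fL9, if_neg (asymm ht), if_neg ht.ne, if_pos h]
  simp only [gamma, zero_add, h1, fL9_zero, sub_zero]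
  rw [mul_div_assoc, div_self ht.ne, mul_one]

lemma gu_neg_rat {t : ℝ} (ht : t < 0) (h : ¬ Irrational t) : gamma fU9 0 t = t + 2 := by
  have h1 : fU9 t = t ^ 2 + 2 * t + 1 := by
    simp only [fU9, if_neg (asymm ht), if_neg ht.ne, if_neg h]
  simp only [gamma, zero_add, h1, fU9_zero]
  rw [div_eq_iff ht.ne]
  ring

lemma gu_neg_irr {t : ℝ} (ht : t < 0) (h : Irrational t) : gamma fU9 0 t = t + 1 := by
  have h1 : fU9 t = t ^ 2 + t + 1 := by
    simp only [fU9, if_neg (asymm ht), if_neg ht.ne, if_pos h]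
  simp only [gamma, zero_add, h1, fU9_zero]
  rw [div_eq_iff ht.ne]
  ring

/-- The rational sequence `-1/(n+1)` tending to `0⁻`. -/
noncomputable def useq : ℕ → ℝ := fun n => -(1 / ((n : ℝ) + 1))

/-- The irrational sequence `-√2/(n+1)` tending to `0⁻`. -/
noncomputable def vseq : ℕ → ℝ := fun n => -(Real.sqrt 2 / ((n : ℝ) + 1))

lemma useq_neg (n : ℕ) : useq n < 0 := by
  have : (0:ℝ) < (n : ℝ) + 1 := by positivity
  simp only [useq, neg_lt_zero]
  positivity

lemma vseq_neg (n : ℕ) : vseq n < 0 := by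
  have h2 : (0:ℝ) < Real.sqrt 2 := by positivity
  have : (0:ℝ) < (n : ℝ) + 1 := by positivity
  simp only [vseq, neg_lt_zero]
  positivity

lemma useq_rat (n : ℕ) : ¬ Irrational (useq n) := by
  have : useq n = ((-(1 / ((n : ℚ) + 1)) : ℚ) : ℝ) := by
    simp only [useq]; push_cast; ring
  rw [this]
  exact Rat.not_irrational _

lemma vseq_irr (n : ℕ) : Irrational (vseq n) := by
  have hq : ((n : ℚ) + 1) ≠ 0 := by positivity
  have h : Irrational (Real.sqrt 2 / (((n : ℚ) + 1 : ℚ) : ℝ)) :=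
    irrational_sqrt_two.div_ratCast hq
  have : vseq n = -(Real.sqrt 2 / (((n : ℚ) + 1 : ℚ) : ℝ)) := by
    simp only [vseq]; push_cast; ring
  rw [this]
  exact h.neg

lemma useq_tendsto : Tendsto useq atTop (𝓝[<] (0 : ℝ)) := by
  apply tendsto_nhdsWithin_of_tendsto_nhds_of_eventually_within
  · have h0 : Tendsto (fun n : ℕ => -(1 / ((n:ℝ) + 1))) atTop (𝓝 (-0)) :=
      tendsto_one_div_add_atTop_nhds_zero_nat.neg
    rw [neg_zero] at h0
    exact h0
  · exact Eventually.of_forall fun n => useq_neg n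

lemma vseq_tendsto : Tendsto vseq atTop (𝓝[<] (0 : ℝ)) := by
  apply tendsto_nhdsWithin_of_tendsto_nhds_of_eventually_within
  · have h := tendsto_one_div_add_atTop_nhds_zero_nat.const_mul (Real.sqrt 2)
    have h' : Tendsto (fun n : ℕ => -(Real.sqrt 2 * (1 / ((n:ℝ) + 1)))) atTop (𝓝 (-(Real.sqrt 2 * 0))) := h.neg
    simp only [mul_zero, neg_zero] at h'
    exact h'.congr fun n => by simp only [mul_one_div, vseq]
  · exact Eventually.of_forall fun n => vseq_neg n

lemma cluster_sub (γ : ℝ → ℝ)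
    (h : ∀ t ∈ Set.Ioo (-1 : ℝ) 0, |γ t - 1| ≤ |t| ∨ |γ t - 2| ≤ |t|) :
    {c : ℝ | MapClusterPt c (𝓝[<] (0 : ℝ)) γ} ⊆ {1, 2} := by
  intro c hc
  by_contra hcm
  simp only [Set.mem_insert_iff, Set.mem_singleton_iff, not_or] at hcm
  obtain ⟨hc1, hc2⟩ := hcm
  set ε : ℝ := min |c - 1| |c - 2| / 2 with hεdef
  have h1 : 0 < |c - 1| := abs_pos.2 (sub_ne_zero.2 hc1)
  have h2 : 0 < |c - 2| := abs_pos.2 (sub_ne_zero.2 hc2)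
  have hε0 : 0 < ε := div_pos (lt_min h1 h2) two_pos
  set ε' : ℝ := min ε 1 with hε'def
  have hε'0 : 0 < ε' := lt_min hε0 one_pos
  have hev : ∀ᶠ t in 𝓝[<] (0 : ℝ), γ t ∉ Metric.ball c ε := by
    filter_upwards [Ioo_mem_nhdsLT_of_mem (Set.mem_Ioc.2 ⟨neg_lt_zero.2 hε'0, le_refl (0:ℝ)⟩)]
      with t ht hmem
    rw [Metric.mem_ball, Real.dist_eq] at hmem
    have hε'1 : ε' ≤ 1 := min_le_right _ _
    have ht1 : -1 < t := by linarith [ht.1]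
    have htabs : |t| < ε' := by
      rw [abs_of_neg ht.2]; linarith [ht.1]
    have hεε' : ε' ≤ ε := min_le_left _ _
    have hmin1 : min |c - 1| |c - 2| ≤ |c - 1| := min_le_left _ _
    have hmin2 : min |c - 1| |c - 2| ≤ |c - 2| := min_le_right _ _
    rcases h t ⟨ht1, ht.2⟩ with hcase | hcase
    · have htri : |c - 1| ≤ |c - γ t| + |γ t - 1| := abs_sub_le c (γ t) 1
      rw [abs_sub_comm c (γ t)] at htri
      have : |c - 1| < ε + ε := by
        calc |c - 1| ≤ |γ t - c| + |γ t - 1| := htri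
        _ < ε + ε := by linarith
      simp only [hεdef] at this hmin1
      linarith
    · have htri : |c - 2| ≤ |c - γ t| + |γ t - 2| := abs_sub_le c (γ t) 2
      rw [abs_sub_comm c (γ t)] at htri
      have : |c - 2| < ε + ε := by
        calc |c - 2| ≤ |γ t - c| + |γ t - 2| := htri
        _ < ε + ε := by linarith
      simp only [hεdef] at this hmin2
      linarith
  have hfreq := (mapClusterPt_iff_frequently.1 hc) (Metric.ball c ε) (Metric.ball_mem_nhds c hε0)
  obtain ⟨t, h1', h2'⟩ := (hfreq.and_eventually hev).exists
  exact h2' h1'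

lemma clusterL : {c : ℝ | MapClusterPt c (𝓝[<] (0 : ℝ)) (gamma fL9 0)} = {1, 2} := by
  apply Set.Subset.antisymm
  · apply cluster_sub
    intro t ht
    by_cases h : Irrational t
    · right; rw [gl_neg_irr ht.2 h]; simp [abs_nonneg]
    · left; rw [gl_neg_rat ht.2 h]; simp [abs_nonneg]
  · intro c hc
    rcases hc with hc | hc
    · subst hc
      refine MapClusterPt.of_comp useq_tendsto ?_
      apply Tendsto.mapClusterPt
      have : (gamma fL9 0 ∘ useq) = fun _ => (1:ℝ) := by
        funext n; exact gl_neg_rat (useq_neg n) (useq_rat n)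
      rw [this]; exact tendsto_const_nhds
    · rw [Set.mem_singleton_iff] at hc; subst hc
      refine MapClusterPt.of_comp vseq_tendsto ?_
      apply Tendsto.mapClusterPt
      have : (gamma fL9 0 ∘ vseq) = fun _ => (2:ℝ) := by
        funext n; exact gl_neg_irr (vseq_neg n) (vseq_irr n)
      rw [this]; exact tendsto_const_nhds

lemma clusterU : {c : ℝ | MapClusterPt c (𝓝[<] (0 : ℝ)) (gamma fU9 0)} = {1, 2} := by
  apply Set.Subset.antisymm
  · apply cluster_sub
    intro t ht
    by_cases h : Irrational t
    · left; rw [gu_neg_irr ht.2 h]; simp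
    · right; rw [gu_neg_rat ht.2 h]; simp
  · intro c hc
    have hv0 : Tendsto vseq atTop (𝓝 (0:ℝ)) := vseq_tendsto.mono_right nhdsWithin_le_nhds
    have hu0 : Tendsto useq atTop (𝓝 (0:ℝ)) := useq_tendsto.mono_right nhdsWithin_le_nhds
    rcases hc with hc | hc
    · subst hc
      refine MapClusterPt.of_comp vseq_tendsto ?_
      apply Tendsto.mapClusterPt
      have heq : (gamma fU9 0 ∘ vseq) = fun n => vseq n + 1 := by
        funext n; exact gu_neg_irr (vseq_neg n) (vseq_irr n)
      rw [heq]
      have := hv0.add_const (1:ℝ)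
      simpa using this
    · rw [Set.mem_singleton_iff] at hc; subst hc
      refine MapClusterPt.of_comp useq_tendsto ?_
      apply Tendsto.mapClusterPt
      have heq : (gamma fU9 0 ∘ useq) = fun n => useq n + 2 := by
        funext n; exact gu_neg_rat (useq_neg n) (useq_rat n)
      rw [heq]
      have := hu0.add_const (2:ℝ)
      simpa using this

lemma min_left_tendsto :
    Tendsto (fun t => min (gamma fL9 0 t) (gamma fU9 0 t)) (𝓝[<] (0 : ℝ)) (𝓝 1) := by
  have hlow : Tendsto (fun t : ℝ => t + 1) (𝓝[<] (0:ℝ)) (𝓝 1) := by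
    have : Tendsto (fun t : ℝ => t + 1) (𝓝 (0:ℝ)) (𝓝 (0 + 1)) :=
      (continuous_id.add continuous_const).tendsto 0
    simpa using this.mono_left nhdsWithin_le_nhds
  refine tendsto_of_tendsto_of_tendsto_of_le_of_le' hlow tendsto_const_nhds ?_ ?_
  · filter_upwards [Ioo_mem_nhdsLT_of_mem (Set.mem_Ioc.2 ⟨show (-1:ℝ) < 0 by norm_num, le_refl (0:ℝ)⟩)]
      with t ht
    by_cases h : Irrational t
    · rw [gl_neg_irr ht.2 h, gu_neg_irr ht.2 h]
      exact le_min (by linarith [ht.1, ht.2]) (le_refl _)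
    · rw [gl_neg_rat ht.2 h, gu_neg_rat ht.2 h]
      exact le_min (by linarith [ht.1, ht.2]) (by linarith [ht.1, ht.2])
  · filter_upwards [Ioo_mem_nhdsLT_of_mem (Set.mem_Ioc.2 ⟨show (-1:ℝ) < 0 by norm_num, le_refl (0:ℝ)⟩)]
      with t ht
    by_cases h : Irrational t
    · rw [gl_neg_irr ht.2 h, gu_neg_irr ht.2 h]
      exact le_trans (min_le_right _ _) (by linarith [ht.1, ht.2])
    · rw [gl_neg_rat ht.2 h, gu_neg_rat ht.2 h]
      exact min_le_left _ _

lemma max_left_tendsto :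
    Tendsto (fun t => max (gamma fL9 0 t) (gamma fU9 0 t)) (𝓝[<] (0 : ℝ)) (𝓝 2) := by
  have hlow : Tendsto (fun t : ℝ => t + 2) (𝓝[<] (0:ℝ)) (𝓝 2) := by
    have : Tendsto (fun t : ℝ => t + 2) (𝓝 (0:ℝ)) (𝓝 (0 + 2)) :=
      (continuous_id.add continuous_const).tendsto 0
    simpa using this.mono_left nhdsWithin_le_nhds
  refine tendsto_of_tendsto_of_tendsto_of_le_of_le' hlow tendsto_const_nhds ?_ ?_
  · filter_upwards [Ioo_mem_nhdsLT_of_mem (Set.mem_Ioc.2 ⟨show (-1:ℝ) < 0 by norm_num, le_refl (0:ℝ)⟩)]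
      with t ht
    by_cases h : Irrational t
    · rw [gl_neg_irr ht.2 h, gu_neg_irr ht.2 h]
      exact le_trans (by linarith [ht.1, ht.2]) (le_max_left _ _)
    · rw [gl_neg_rat ht.2 h, gu_neg_rat ht.2 h]
      exact le_max_right _ _
  · filter_upwards [Ioo_mem_nhdsLT_of_mem (Set.mem_Ioc.2 ⟨show (-1:ℝ) < 0 by norm_num, le_refl (0:ℝ)⟩)]
      with t ht
    by_cases h : Irrational t
    · rw [gl_neg_irr ht.2 h, gu_neg_irr ht.2 h]
      exact max_le (le_refl _) (by linarith [ht.1, ht.2])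
    · rw [gl_neg_rat ht.2 h, gu_neg_rat ht.2 h]
      exact max_le (by norm_num) (by linarith [ht.1, ht.2])

lemma no_left_limit {γ : ℝ → ℝ}
    (hset : {c : ℝ | MapClusterPt c (𝓝[<] (0 : ℝ)) γ} = {1, 2}) :
    ¬ ∃ d : ℝ, Tendsto γ (𝓝[<] (0 : ℝ)) (𝓝 d) := by
  rintro ⟨d, hd⟩
  have h1 : MapClusterPt 1 (𝓝[<] (0 : ℝ)) γ := by
    have : (1:ℝ) ∈ ({1, 2} : Set ℝ) := by simp
    rw [← hset] at this; exact this
  have h2 : MapClusterPt 2 (𝓝[<] (0 : ℝ)) γ := by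
    have : (2:ℝ) ∈ ({1, 2} : Set ℝ) := by simp
    rw [← hset] at this; exact this
  have key : ∀ c : ℝ, MapClusterPt c (𝓝[<] (0 : ℝ)) γ → c = d := by
    intro c hc
    have hle : map γ (𝓝[<] (0 : ℝ)) ≤ 𝓝 d := hd
    exact eq_of_nhds_neBot (hc.clusterPt.mono hle)
  have h12 : (1:ℝ) = 2 := (key 1 h1).trans (key 2 h2).symm
  norm_num at h12

/-- Example 3.2: `fL ≤ fU` pointwise, the right-sided derivatives of `fL, fU` at `0`
exist and equal `1, 2`, the difference quotients are left complementary at `0` with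
values `{1, 2}` (in particular neither endpoint function has a left-sided derivative
at `0`), and `F = [fL, fU]` is gH-differentiable at `0` with gH-derivative `[1, 2]`. -/
theorem gH_differentiable_left_complementary_example :
    (∀ x, fL9 x ≤ fU9 x) ∧
    Tendsto (gamma fL9 0) (𝓝[>] (0 : ℝ)) (𝓝 1) ∧
    Tendsto (gamma fU9 0) (𝓝[>] (0 : ℝ)) (𝓝 2) ∧
    LeftComplementary (gamma fL9 0) (gamma fU9 0) 1 2 ∧
    (¬ ∃ d : ℝ, Tendsto (gamma fL9 0) (𝓝[<] (0 : ℝ)) (𝓝 d)) ∧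
    (¬ ∃ d : ℝ, Tendsto (gamma fU9 0) (𝓝[<] (0 : ℝ)) (𝓝 d)) ∧
    gHDifferentiableAt fL9 fU9 0 1 2 := by
  have hLpos : Tendsto (gamma fL9 0) (𝓝[>] (0 : ℝ)) (𝓝 1) := by
    apply Tendsto.congr' _ (tendsto_const_nhds (α := ℝ) (x := (1:ℝ)))
    filter_upwards [self_mem_nhdsWithin] with t ht
    exact (gl_pos ht).symm
  have hUpos : Tendsto (gamma fU9 0) (𝓝[>] (0 : ℝ)) (𝓝 2) := by
    apply Tendsto.congr' _ (tendsto_const_nhds (α := ℝ) (x := (2:ℝ)))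
    filter_upwards [self_mem_nhdsWithin] with t ht
    exact (gu_pos ht).symm
  have hminpos : Tendsto (fun t => min (gamma fL9 0 t) (gamma fU9 0 t)) (𝓝[>] (0 : ℝ)) (𝓝 1) := by
    apply Tendsto.congr' _ (tendsto_const_nhds (α := ℝ) (x := (1:ℝ)))
    filter_upwards [self_mem_nhdsWithin] with t ht
    rw [gl_pos ht, gu_pos ht]; norm_num
  have hmaxpos : Tendsto (fun t => max (gamma fL9 0 t) (gamma fU9 0 t)) (𝓝[>] (0 : ℝ)) (𝓝 2) := by
    apply Tendsto.congr' _ (tendsto_const_nhds (α := ℝ) (x := (2:ℝ)))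
    filter_upwards [self_mem_nhdsWithin] with t ht
    rw [gl_pos ht, gu_pos ht]; norm_num
  refine ⟨?_, hLpos, hUpos,
    ⟨by norm_num, clusterL, clusterU, min_left_tendsto, max_left_tendsto⟩,
    no_left_limit clusterL, no_left_limit clusterU,
    by norm_num, ?_, ?_⟩
  · intro x
    rcases lt_trichotomy x 0 with hx | hx | hx
    · by_cases h : Irrational x
      · simp only [fL9, fU9, if_neg (asymm hx), if_neg hx.ne, if_pos h]
        nlinarith [sq_nonneg (x - 1)]
      · simp only [fL9, fU9, if_neg (asymm hx), if_neg hx.ne, if_neg h]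
        nlinarith [sq_nonneg (x + 1)]
    · subst hx; rw [fL9_zero, fU9_zero]; norm_num
    · simp only [fL9, fU9, if_pos hx]; linarith
  · rw [← nhdsLT_sup_nhdsGT, tendsto_sup]
    exact ⟨min_left_tendsto, hminpos⟩
  · rw [← nhdsLT_sup_nhdsGT, tendsto_sup]
    exact ⟨max_left_tendsto, hmaxpos⟩
end

section
/- Conditional additivity of the gH-product in the first argument: let ν, ω ∈ ℝⁿ and let K be an n-tuple of intervals with lower endpoints kᴸ and upper endpoints kᵁ (kᴸ ≤ kᵁ componentwise). If either (ν·kᴸ ≤ ν·kᵁ and ω·kᴸ ≤ ω·kᵁ) or (ν·kᴸ ≥ ν·kᵁ and ω·kᴸ ≥ ω·kᵁ), then ⟨ν + ω, K⟩_gH = ⟨ν, K⟩_gH + ⟨ω, K⟩_gH, where the sum on the right is interval addition. -/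
open Finset

/-- Euclidean dot product of two vectors in `ℝⁿ`. -/
def dotv {n : ℕ} (v w : Fin n → ℝ) : ℝ := ∑ i, v i * w i

/-- The gH-product of a vector `ν ∈ ℝⁿ` with an n-tuple of intervals given by its lower
endpoints `kL` and upper endpoints `kU`:
`⟨ν, K⟩_gH = [min(ν·kᴸ, ν·kᵁ), max(ν·kᴸ, ν·kᵁ)]`. -/
noncomputable def gHprod {n : ℕ} (v kL kU : Fin n → ℝ) : ℝ × ℝ :=
  (min (dotv v kL) (dotv v kU), max (dotv v kL) (dotv v kU))

lemma dotv_add {n : ℕ} (v w u : Fin n → ℝ) : dotv (v + w) u = dotv v u + dotv w u := by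
  simp [dotv, add_mul, Finset.sum_add_distrib]

/-- Conditional additivity of the gH-product in the first argument: if
`ν·kᴸ ≤ ν·kᵁ` and `ω·kᴸ ≤ ω·kᵁ`, or `ν·kᴸ ≥ ν·kᵁ` and `ω·kᴸ ≥ ω·kᵁ`, then
`⟨ν + ω, K⟩_gH = ⟨ν, K⟩_gH + ⟨ω, K⟩_gH` (interval addition being componentwise). -/
theorem gHprod_add_of_same_order {n : ℕ} (ν ω kL kU : Fin n → ℝ) (h : ∀ i, kL i ≤ kU i)
    (hcase : (dotv ν kL ≤ dotv ν kU ∧ dotv ω kL ≤ dotv ω kU) ∨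
             (dotv ν kU ≤ dotv ν kL ∧ dotv ω kU ≤ dotv ω kL)) :
    gHprod (ν + ω) kL kU = gHprod ν kL kU + gHprod ω kL kU := by
  rcases hcase with ⟨h1, h2⟩ | ⟨h1, h2⟩ <;>
    simp [gHprod, Prod.ext_iff, dotv_add, min_eq_left, min_eq_right, max_eq_left,
      max_eq_right, h1, h2, add_le_add h1 h2, add_le_add h2 h1,
      min_eq_left (add_le_add h1 h2), max_eq_right (add_le_add h1 h2),
      min_eq_right (add_le_add h1 h2), max_eq_left (add_le_add h1 h2)]
end
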